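/- Suppose ρ ∈ D_δ (so Δ_{n−1}^{1+δ} ≤ C Δ_n) with 0 < δ < α ≤ 1, Δ_n/Δ_{n−m} ≤ C λ^m for some λ ∈ (0,1), and define ε_n = Σ_{m=0}^{n} (Δ_n/Δ_{n−m}) Δ_{n−m−1}^α (with Δ_{−1} = 1). Then ε_n = O(Δ_n^{α/(1+δ)}). -/

import Mathlib

/-- Sequence-theoretic version of the lemma on `ε n`.  Here `D (n+1)` plays the role of
`Δ n` and `D 0 = 1` plays the role of `Δ₋₁`.  Under the Diophantine-type bound
`D n ^ (1+δ) ≤ C · D (n+1)` and the exponential decay `D (n+1) ≤ C λ^m D (n+1-m)`,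
the quantity `ε n = Σ_{m=0}^{n} (Δ n / Δ (n-m)) Δ (n-m-1)^α` is `O(Δ n ^ (α/(1+δ)))`. -/
theorem epsilon_estimate
    (D : ℕ → ℝ) (α δ C lam : ℝ)
    (hδ : 0 < δ) (hδα : δ < α) (hα : α ≤ 1) (hC : 0 < C) (hlam : lam ∈ Set.Ioo (0:ℝ) 1)
    (hpos : ∀ n, 0 < D n) (hD0 : D 0 = 1)
    (hdec : ∀ n, D (n + 1) < D n)
    (hDio : ∀ n, D n ^ ((1:ℝ) + δ) ≤ C * D (n + 1))
    (hexp : ∀ n m : ℕ, m ≤ n → D (n + 1) ≤ C * lam ^ m * D (n + 1 - m)) :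
    ∃ K > 0, ∀ n,
      (∑ m ∈ Finset.range (n + 1), (D (n + 1) / D (n + 1 - m)) * D (n - m) ^ α)
        ≤ K * D (n + 1) ^ (α / (1 + δ)) := by
  obtain ⟨hl0, hl1⟩ := hlam
  set p : ℝ := α / (1 + δ) with hp
  have h1δ : (0:ℝ) < 1 + δ := by linarith
  have hp0 : 0 < p := div_pos (by linarith) h1δ
  have hp1 : p < 1 := by rw [hp, div_lt_one h1δ]; linarith
  have hq0 : 0 < 1 - p := by linarith
  set μ : ℝ := lam ^ ((1:ℝ) - p) with hμ
  have hμ0 : 0 < μ := Real.rpow_pos_of_pos hl0 _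
  have hμ1 : μ < 1 := Real.rpow_lt_one hl0.le hl1 hq0
  refine ⟨C / (1 - μ), div_pos hC (by linarith), fun n => ?_⟩
  have ha : 0 < D (n + 1) := hpos _
  have key : ∀ m ∈ Finset.range (n + 1),
      (D (n + 1) / D (n + 1 - m)) * D (n - m) ^ α ≤ C * D (n + 1) ^ p * μ ^ m := by
    intro m hm
    have hmn : m ≤ n := Nat.lt_succ_iff.mp (Finset.mem_range.mp hm)
    have hsub : n - m + 1 = n + 1 - m := by omega
    have hb : 0 < D (n + 1 - m) := hpos _
    have h1 : D (n - m) ^ α ≤ (C * D (n + 1 - m)) ^ p := by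
      have h := hDio (n - m)
      rw [hsub] at h
      have : D (n - m) ^ α = (D (n - m) ^ ((1:ℝ) + δ)) ^ p := by
        rw [← Real.rpow_mul (hpos _).le]
        congr 1
        field_simp [hp]
        rw [hp]; field_simp
      rw [this]
      exact Real.rpow_le_rpow (Real.rpow_nonneg (hpos _).le _) h hp0.le
    have h2 : (D (n + 1) / D (n + 1 - m)) * (C * D (n + 1 - m)) ^ p
        = C ^ p * (D (n + 1) ^ p * (D (n + 1) / D (n + 1 - m)) ^ ((1:ℝ) - p)) := by
      rw [Real.mul_rpow hC.le hb.le, Real.div_rpow ha.le hb.le,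
        Real.rpow_sub ha, Real.rpow_sub hb, Real.rpow_one, Real.rpow_one]
      have h3 : D (n + 1 - m) ^ p ≠ 0 := ne_of_gt (Real.rpow_pos_of_pos hb _)
      have h4 : D (n + 1) ^ p ≠ 0 := ne_of_gt (Real.rpow_pos_of_pos ha _)
      field_simp
    have h5 : (D (n + 1) / D (n + 1 - m)) ^ ((1:ℝ) - p) ≤ (C * lam ^ m) ^ ((1:ℝ) - p) := by
      apply Real.rpow_le_rpow (div_nonneg ha.le hb.le) _ hq0.le
      rw [div_le_iff₀ hb]
      exact hexp n m hmn
    have h6 : (C * lam ^ m) ^ ((1:ℝ) - p) = C ^ ((1:ℝ) - p) * μ ^ m := by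
      rw [Real.mul_rpow hC.le (pow_nonneg hl0.le m)]
      congr 1
      rw [← Real.rpow_natCast lam m, ← Real.rpow_mul hl0.le, mul_comm,
        Real.rpow_mul hl0.le, Real.rpow_natCast]
    calc (D (n + 1) / D (n + 1 - m)) * D (n - m) ^ α
        ≤ (D (n + 1) / D (n + 1 - m)) * (C * D (n + 1 - m)) ^ p :=
          mul_le_mul_of_nonneg_left h1 (div_nonneg ha.le hb.le)
      _ = C ^ p * (D (n + 1) ^ p * (D (n + 1) / D (n + 1 - m)) ^ ((1:ℝ) - p)) := h2
      _ ≤ C ^ p * (D (n + 1) ^ p * (C ^ ((1:ℝ) - p) * μ ^ m)) := by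
          apply mul_le_mul_of_nonneg_left _ (Real.rpow_nonneg hC.le _)
          apply mul_le_mul_of_nonneg_left _ (Real.rpow_nonneg ha.le _)
          rw [← h6]; exact h5
      _ = C * D (n + 1) ^ p * μ ^ m := by
          rw [show C ^ p * (D (n + 1) ^ p * (C ^ ((1:ℝ) - p) * μ ^ m))
              = (C ^ p * C ^ ((1:ℝ) - p)) * D (n + 1) ^ p * μ ^ m by ring,
            ← Real.rpow_add hC]
          norm_num
  calc (∑ m ∈ Finset.range (n + 1), (D (n + 1) / D (n + 1 - m)) * D (n - m) ^ α)
      ≤ ∑ m ∈ Finset.range (n + 1), C * D (n + 1) ^ p * μ ^ m :=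
        Finset.sum_le_sum key
    _ = C * D (n + 1) ^ p * ∑ m ∈ Finset.range (n + 1), μ ^ m := by
        rw [Finset.mul_sum]
    _ ≤ C * D (n + 1) ^ p * (1 / (1 - μ)) := by
        apply mul_le_mul_of_nonneg_left _ (by positivity)
        rw [geom_sum_eq (ne_of_lt hμ1) (n + 1)]
        have he : (μ ^ (n + 1) - 1) / (μ - 1) = (1 - μ ^ (n + 1)) / (1 - μ) := by
          have h1 : μ - 1 ≠ 0 := by linarith
          have h2 : (1:ℝ) - μ ≠ 0 := by linarith
          field_simp
          ring
        rw [he]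
        gcongr
        · have : 0 ≤ μ ^ (n + 1) := pow_nonneg hμ0.le _
          linarith
    _ = C / (1 - μ) * D (n + 1) ^ p := by ring
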